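/- Let y_1, …, y_k ∈ ℝ^d, let δ > 0, and let x_{*,δ} be a minimizer of F_δ. Define the sequences α₀ = 3/4, α_{t+1} = (α_t/2)·(√(α_t² + 4) − α_t), and x⁽⁰⁾ = v⁽⁰⁾ = ȳ := (1/k)·Σ_{i=1}^k y_i, x⁽ᵗ⁺¹⁾ = v⁽ᵗ⁾ − δ·∇F_δ(v⁽ᵗ⁾), v⁽ᵗ⁺¹⁾ = x⁽ᵗ⁺¹⁾ + (α_t(1 − α_t)/(α_t² + α_{t+1}))·(x⁽ᵗ⁺¹⁾ − x⁽ᵗ⁾). Then for all t ≥ 0, F_δ(x⁽ᵗ⁾) − F_δ(x_{*,δ}) ≤ (16/(9(t+1)²))·[ F_δ(ȳ) + (9/(8δ))·F_δ(ȳ)² ]. -/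

import Mathlib

open Finset
open scoped InnerProductSpace

section AuxStmt15
variable {d k : ℕ}

-- key scalar inequality: (t + A)^2 ≤ B implies stuff; helper to go from squares to values
lemma my_le_of_sq_le_sq {a b : ℝ} (hb : 0 ≤ b) (h : a^2 ≤ b^2) (ha : 0 ≤ a) : a ≤ b := by
  nlinarith

lemma term_cvx (δ : ℝ) (hδ : 0 < δ) (u p : EuclideanSpace ℝ (Fin d)) :
    Real.sqrt (‖u‖^2 + δ^2) + ⟪u, p⟫_ℝ / Real.sqrt (‖u‖^2 + δ^2)
      ≤ Real.sqrt (‖u + p‖^2 + δ^2) := by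
  set t := ⟪u, p⟫_ℝ with ht
  set s := Real.sqrt (‖u‖^2 + δ^2) with hs
  set s2 := Real.sqrt (‖u + p‖^2 + δ^2) with hs2
  have hssq : s^2 = ‖u‖^2 + δ^2 := Real.sq_sqrt (by positivity)
  have hs2sq : s2^2 = ‖u + p‖^2 + δ^2 := Real.sq_sqrt (by positivity)
  have hsnn : 0 ≤ s := Real.sqrt_nonneg _
  have hspos : 0 < s := by nlinarith [sq_nonneg ‖u‖]
  have hs2nn : 0 ≤ s2 := Real.sqrt_nonneg _
  have hexp : ‖u + p‖^2 = ‖u‖^2 + 2 * t + ‖p‖^2 := norm_add_sq_real u p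
  have hcs : t^2 ≤ ‖u‖^2 * ‖p‖^2 := by
    have h1 := abs_real_inner_le_norm u p
    nlinarith [abs_nonneg t, sq_abs t, norm_nonneg u, norm_nonneg p]
  rw [← le_sub_iff_add_le', div_le_iff₀ hspos]
  -- goal : t ≤ (s2 - s) * s
  rcases le_or_gt (t + s^2) 0 with h | h
  · nlinarith [mul_nonneg hs2nn hsnn]
  · have hsq : (t + s^2)^2 ≤ (s2 * s)^2 := by nlinarith [sq_nonneg δ, sq_nonneg ‖p‖]
    have := my_le_of_sq_le_sq (mul_nonneg hs2nn hsnn) hsq h.le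
    nlinarith

lemma term_smooth (δ : ℝ) (hδ : 0 < δ) (u p : EuclideanSpace ℝ (Fin d)) :
    Real.sqrt (‖u + p‖^2 + δ^2)
      ≤ Real.sqrt (‖u‖^2 + δ^2) + ⟪u, p⟫_ℝ / Real.sqrt (‖u‖^2 + δ^2)
        + ‖p‖^2 / (2 * δ) := by
  set t := ⟪u, p⟫_ℝ with ht
  set s := Real.sqrt (‖u‖^2 + δ^2) with hs
  set s2 := Real.sqrt (‖u + p‖^2 + δ^2) with hs2
  have hssq : s^2 = ‖u‖^2 + δ^2 := Real.sq_sqrt (by positivity)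
  have hs2sq : s2^2 = ‖u + p‖^2 + δ^2 := Real.sq_sqrt (by positivity)
  have hsnn : 0 ≤ s := Real.sqrt_nonneg _
  have hspos : 0 < s := by nlinarith [sq_nonneg ‖u‖]
  have hsd : δ ≤ s := by nlinarith [sq_nonneg ‖u‖]
  have hs2nn : 0 ≤ s2 := Real.sqrt_nonneg _
  have hexp : ‖u + p‖^2 = ‖u‖^2 + 2 * t + ‖p‖^2 := norm_add_sq_real u p
  have hcs : -(‖u‖ * ‖p‖) ≤ t := neg_abs_le t |>.trans' (by
    have := abs_real_inner_le_norm u p; linarith)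
  have hun : ‖u‖ ≤ s := by
    nlinarith [norm_nonneg u, sq_nonneg δ]
  -- RHS positivity after multiplying by s
  have hrpos : 0 < s^2 + t + s * ‖p‖^2 / (2 * δ) := by
    have h1 : -(s * ‖p‖) ≤ t := le_trans (by nlinarith [norm_nonneg p]) hcs
    have h2 : ‖p‖^2 / 2 ≤ s * ‖p‖^2 / (2 * δ) := by
      rw [div_le_div_iff₀ (by norm_num) (by positivity)]
      nlinarith [sq_nonneg ‖p‖]
    nlinarith [sq_nonneg (s - ‖p‖)]
  have h2c : s^2 * ‖p‖^2 ≤ 2 * s^2 * (s * ‖p‖^2 / (2 * δ)) := by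
    have e : 2 * s^2 * (s * ‖p‖^2 / (2*δ)) = s^3 * ‖p‖^2 / δ := by field_simp
    rw [e, le_div_iff₀ hδ]
    nlinarith [mul_nonneg (mul_nonneg (sq_nonneg s) (sq_nonneg ‖p‖)) (sub_nonneg.mpr hsd)]
  have hsq : (s2 * s)^2 ≤ (s^2 + t + s * ‖p‖^2 / (2 * δ))^2 := by
    have he : (s2 * s)^2 = s^2 * (s^2 + 2*t + ‖p‖^2) := by
      rw [mul_pow, hs2sq, hexp, hssq]; ring
    nlinarith [sq_nonneg (t + s * ‖p‖^2 / (2 * δ))]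
  have hmain : s2 * s ≤ s^2 + t + s * ‖p‖^2 / (2 * δ) :=
    my_le_of_sq_le_sq hrpos.le hsq (mul_nonneg hs2nn hsnn)
  have hfin : s2 ≤ (s^2 + t + s * ‖p‖^2 / (2 * δ)) / s := (le_div_iff₀ hspos).mpr hmain
  have heq : (s^2 + t + s * ‖p‖^2 / (2 * δ)) / s = s + t / s + ‖p‖^2 / (2 * δ) := by
    field_simp
  linarith

lemma inner_grad_eq (y : Fin k → EuclideanSpace ℝ (Fin d)) (δ : ℝ)
    (w q : EuclideanSpace ℝ (Fin d)) :
    ⟪(k:ℝ)⁻¹ • ∑ i, (Real.sqrt (‖w - y i‖^2 + δ^2))⁻¹ • (w - y i), q⟫_ℝ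
      = (k:ℝ)⁻¹ * ∑ i, ⟪w - y i, q⟫_ℝ / Real.sqrt (‖w - y i‖^2 + δ^2) := by
  rw [real_inner_smul_left, sum_inner]
  congr 1
  refine Finset.sum_congr rfl fun i _ => ?_
  rw [real_inner_smul_left]
  rw [div_eq_inv_mul]

lemma global_cvx (y : Fin k → EuclideanSpace ℝ (Fin d)) (δ : ℝ) (hδ : 0 < δ)
    (w z : EuclideanSpace ℝ (Fin d)) :
    (k:ℝ)⁻¹ * ∑ i, Real.sqrt (‖w - y i‖^2 + δ^2)
      + ⟪(k:ℝ)⁻¹ • ∑ i, (Real.sqrt (‖w - y i‖^2 + δ^2))⁻¹ • (w - y i), z - w⟫_ℝ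
      ≤ (k:ℝ)⁻¹ * ∑ i, Real.sqrt (‖z - y i‖^2 + δ^2) := by
  rw [inner_grad_eq, ← mul_add, ← Finset.sum_add_distrib]
  refine mul_le_mul_of_nonneg_left (Finset.sum_le_sum fun i _ => ?_) (by positivity)
  · have h := term_cvx δ hδ (w - y i) (z - w)
    rwa [show w - y i + (z - w) = z - y i by abel] at h

lemma global_smooth (y : Fin k → EuclideanSpace ℝ (Fin d)) (δ : ℝ) (hδ : 0 < δ) (hk : 0 < k)
    (w z : EuclideanSpace ℝ (Fin d)) :
    (k:ℝ)⁻¹ * ∑ i, Real.sqrt (‖z - y i‖^2 + δ^2)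
      ≤ (k:ℝ)⁻¹ * ∑ i, Real.sqrt (‖w - y i‖^2 + δ^2)
      + ⟪(k:ℝ)⁻¹ • ∑ i, (Real.sqrt (‖w - y i‖^2 + δ^2))⁻¹ • (w - y i), z - w⟫_ℝ
      + ‖z - w‖^2 / (2 * δ) := by
  rw [inner_grad_eq, ← mul_add]
  have hkr : (0:ℝ) < k := Nat.cast_pos.mpr hk
  have hone : ‖z - w‖^2 / (2*δ) = (k:ℝ)⁻¹ * ∑ _i : Fin k, ‖z - w‖^2 / (2*δ) := by
    rw [Finset.sum_const, card_univ, Fintype.card_fin, nsmul_eq_mul]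
    field_simp
  rw [hone, ← mul_add, ← Finset.sum_add_distrib, ← Finset.sum_add_distrib]
  refine mul_le_mul_of_nonneg_left (Finset.sum_le_sum fun i _ => ?_) (by positivity)
  · have h := term_smooth δ hδ (w - y i) (z - w)
    rwa [show w - y i + (z - w) = z - y i by abel] at h

section Alpha
variable (α : ℕ → ℝ) (hα0 : α 0 = 3 / 4)
  (hα : ∀ t, α (t + 1) = (α t / 2) * (Real.sqrt ((α t) ^ 2 + 4) - α t))

include hα0 hα in
lemma alpha_pos : ∀ t, 0 < α t := by
  intro t
  induction t with
  | zero => rw [hα0]; norm_num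
  | succ t ih =>
    rw [hα t]
    have h1 : α t < Real.sqrt ((α t)^2 + 4) := by
      nlinarith [Real.sq_sqrt (by positivity : (0:ℝ) ≤ (α t)^2 + 4),
        Real.sqrt_nonneg ((α t)^2 + 4)]
    nlinarith

include hα0 hα in
lemma alpha_sq : ∀ t, (α (t+1))^2 = (α t)^2 * (1 - α (t+1)) := by
  intro t
  have hsq : (Real.sqrt ((α t)^2 + 4))^2 = (α t)^2 + 4 :=
    Real.sq_sqrt (by positivity)
  rw [hα t]
  linear_combination ((α t)^2/4) * hsq

include hα0 hα in
lemma alpha_le : ∀ t, α t ≤ 2 / ((t:ℝ) + 2) := by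
  intro t
  induction t with
  | zero => rw [hα0]; norm_num
  | succ t ih =>
    set n : ℝ := (t : ℝ) with hn
    have hn0 : (0:ℝ) ≤ n := Nat.cast_nonneg t
    have ha := alpha_pos α hα0 hα t
    have hq := alpha_pos α hα0 hα (t+1)
    have hrec := alpha_sq α hα0 hα t
    set a := α t
    set q := α (t+1)
    have hq1 : q ≤ 1 := by nlinarith
    push_cast
    show q ≤ 2 / (n + 1 + 2)
    by_contra hcon
    push_neg at hcon
    set b : ℝ := 2 / (n + 3) with hb
    have hb' : b < q := by
      have : (2:ℝ) / (n + 1 + 2) = b := by rw [hb]; ring_nf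
      linarith [this ▸ hcon]
    have hbpos : 0 < b := by positivity
    have hb1 : b ≤ 1 := by rw [hb, div_le_one (by linarith)]; linarith
    have hA : a^2 ≤ (2/(n+2))^2 := by
      have h2 : (0:ℝ) < 2/(n+2) := by positivity
      nlinarith
    have key : (2/(n+2))^2 * (1 - b) ≤ b^2 := by
      have h1mb : 1 - b = (n+1)/(n+3) := by rw [hb]; field_simp; ring
      rw [h1mb, hb, div_pow, div_pow, div_mul_div_comm,
        div_le_div_iff₀ (by positivity) (by positivity)]
      nlinarith
    have : q^2 < b^2 := by
      calc q^2 = a^2 * (1 - q) := hrec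
        _ < a^2 * (1 - b) := by nlinarith
        _ ≤ (2/(n+2))^2 * (1 - b) := by nlinarith
        _ ≤ b^2 := key
    nlinarith
end Alpha

end AuxStmt15

set_option maxHeartbeats 1000000 in
/-- **Sub-optimality bound for accelerated gradient descent on the Charbonnier
relaxation** (Lemma `lem:subopt`). With `F_δ(z) = (1/k) Σ √(‖z − yᵢ‖² + δ²)`,
`∇F_δ(z) = (1/k) Σ (z − yᵢ)/√(‖z − yᵢ‖² + δ²)`, minimizer `x_{*,δ}`, step size `δ`,
momentum coefficients `α₀ = 3/4`, `α_{t+1} = (α_t/2)(√(α_t² + 4) − α_t)`, iterates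
`x⁽⁰⁾ = v⁽⁰⁾ = ȳ`, `x⁽ᵗ⁺¹⁾ = v⁽ᵗ⁾ − δ ∇F_δ(v⁽ᵗ⁾)`,
`v⁽ᵗ⁺¹⁾ = x⁽ᵗ⁺¹⁾ + (α_t(1−α_t)/(α_t²+α_{t+1}))(x⁽ᵗ⁺¹⁾ − x⁽ᵗ⁾)`, one has for all `t`
`F_δ(x⁽ᵗ⁾) − F_δ(x_{*,δ}) ≤ (16/(9(t+1)²))·(F_δ(ȳ) + (9/(8δ)) F_δ(ȳ)²)`. -/
theorem stmt15 {d k : ℕ} (hk : 0 < k)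
    (y : Fin k → EuclideanSpace ℝ (Fin d))
    (δ : ℝ) (hδ : 0 < δ)
    (Fδ : EuclideanSpace ℝ (Fin d) → ℝ)
    (hFδ : ∀ z, Fδ z = (k : ℝ)⁻¹ * ∑ i, Real.sqrt (‖z - y i‖ ^ 2 + δ ^ 2))
    (gradFδ : EuclideanSpace ℝ (Fin d) → EuclideanSpace ℝ (Fin d))
    (hgrad : ∀ z, gradFδ z =
      (k : ℝ)⁻¹ • ∑ i, (Real.sqrt (‖z - y i‖ ^ 2 + δ ^ 2))⁻¹ • (z - y i))
    (xstar : EuclideanSpace ℝ (Fin d)) (hxstar : ∀ z, Fδ xstar ≤ Fδ z)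
    (ybar : EuclideanSpace ℝ (Fin d)) (hybar : ybar = (k : ℝ)⁻¹ • ∑ i, y i)
    (α : ℕ → ℝ) (hα0 : α 0 = 3 / 4)
    (hα : ∀ t, α (t + 1) = (α t / 2) * (Real.sqrt ((α t) ^ 2 + 4) - α t))
    (x v : ℕ → EuclideanSpace ℝ (Fin d))
    (hx0 : x 0 = ybar) (hv0 : v 0 = ybar)
    (hxrec : ∀ t, x (t + 1) = v t - δ • gradFδ (v t))
    (hvrec : ∀ t, v (t + 1) = x (t + 1) +
      ((α t * (1 - α t)) / ((α t) ^ 2 + α (t + 1))) • (x (t + 1) - x t)) :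
    ∀ t : ℕ, Fδ (x t) - Fδ xstar ≤
      (16 / (9 * ((t : ℝ) + 1) ^ 2)) * (Fδ ybar + (9 / (8 * δ)) * (Fδ ybar) ^ 2) := by
  -- basic facts
  have hap : ∀ t, 0 < α t := alpha_pos α hα0 hα
  have hasq : ∀ t, (α (t+1))^2 = (α t)^2 * (1 - α (t+1)) := alpha_sq α hα0 hα
  have hale : ∀ t, α t ≤ 2 / ((t:ℝ) + 2) := alpha_le α hα0 hα
  have hale1 : ∀ t, α t ≤ 1 := by
    intro t
    refine (hale t).trans ?_
    rw [div_le_one (by positivity)]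
    have : (0:ℝ) ≤ (t:ℝ) := Nat.cast_nonneg t
    linarith
  -- convexity / smoothness, in terms of Fδ and gradFδ
  have G1 : ∀ w z, Fδ w + ⟪gradFδ w, z - w⟫_ℝ ≤ Fδ z := by
    intro w z
    rw [hFδ, hFδ, hgrad]
    exact global_cvx y δ hδ w z
  have G2 : ∀ w z, Fδ z ≤ Fδ w + ⟪gradFδ w, z - w⟫_ℝ + ‖z - w‖^2 / (2 * δ) := by
    intro w z
    rw [hFδ, hFδ, hgrad]
    exact global_smooth y δ hδ hk w z
  -- descent inequality
  have G3 : ∀ w, Fδ (w - δ • gradFδ w) ≤ Fδ w - (δ/2) * ‖gradFδ w‖^2 := by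
    intro w
    have h := G2 w (w - δ • gradFδ w)
    have e1 : w - δ • gradFδ w - w = -(δ • gradFδ w) := by abel
    rw [e1] at h
    rw [inner_neg_right, real_inner_smul_right, real_inner_self_eq_norm_sq,
      norm_neg, norm_smul, Real.norm_eq_abs, abs_of_pos hδ, mul_pow] at h
    have e2 : δ^2 * ‖gradFδ w‖^2 / (2*δ) = (δ/2) * ‖gradFδ w‖^2 := by
      field_simp
    rw [e2] at h
    linarith
  -- the auxiliary sequence z
  obtain ⟨z, hz0, hzrec⟩ : ∃ z : ℕ → EuclideanSpace ℝ (Fin d), z 0 = ybar ∧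
      ∀ t, z (t+1) = z t - (δ / α t) • gradFδ (v t) :=
    ⟨fun n => Nat.rec ybar (fun s zs => zs - (δ / α s) • gradFδ (v s)) n, rfl, fun t => rfl⟩
  -- v t is a convex combination of x t and z t
  have hvz : ∀ t, v t = (1 - α t) • x t + α t • z t := by
    intro t
    induction t with
    | zero =>
      rw [hv0, hx0, hz0]
      module
    | succ t ih =>
      have ha := hap t
      have haq := hap (t+1)
      have hzt : α t • z t = v t - (1 - α t) • x t := by
        rw [ih]; module
      have hδg : (δ / α t) • gradFδ (v t) = (α t)⁻¹ • (v t - x (t+1)) := by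
        rw [hxrec t]
        rw [show v t - (v t - δ • gradFδ (v t)) = δ • gradFδ (v t) by abel]
        rw [smul_smul, div_eq_mul_inv, mul_comm]
      have hzt1 : z (t+1) = (α t)⁻¹ • (x (t+1) - (1 - α t) • x t) := by
        rw [hzrec t, hδg]
        have : z t = (α t)⁻¹ • (v t - (1 - α t) • x t) := by
          rw [← hzt, smul_smul, inv_mul_cancel₀ ha.ne', one_smul]
        rw [this]
        rw [← smul_sub]
        congr 1
        abel
      rw [hvrec t, hzt1]
      have hden : (α t)^2 + α (t+1) > 0 := by positivity
      have hcoef : (α t * (1 - α t)) / ((α t)^2 + α (t+1))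
          = α (t+1) * (1 - α t) / α t := by
        rw [div_eq_div_iff hden.ne' ha.ne']
        linear_combination (α t - 1) * (hasq t)
      rw [hcoef]
      match_scalars
      · field_simp
        ring
      · field_simp
  -- one-step estimate
  have key : ∀ t, Fδ (x (t+1)) - Fδ xstar + (α t)^2/(2*δ) * ‖z (t+1) - xstar‖^2
      ≤ (1 - α t) * (Fδ (x t) - Fδ xstar) + (α t)^2/(2*δ) * ‖z t - xstar‖^2 := by
    intro t
    set g := gradFδ (v t) with hg
    set a := α t with ha'
    have ha : 0 < a := hap t
    have ha1 : a ≤ 1 := hale1 t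
    have h1 : Fδ (x (t+1)) ≤ Fδ (v t) - (δ/2) * ‖g‖^2 := by
      rw [hxrec t]; exact G3 (v t)
    have h2 : Fδ (v t) + ⟪g, x t - v t⟫_ℝ ≤ Fδ (x t) := G1 (v t) (x t)
    have h3 : Fδ (v t) + ⟪g, xstar - v t⟫_ℝ ≤ Fδ xstar := G1 (v t) xstar
    -- inner-product bookkeeping
    have hcomb : (1 - a) * ⟪g, x t - v t⟫_ℝ + a * ⟪g, xstar - v t⟫_ℝ
        = a * ⟪g, xstar - z t⟫_ℝ := by
      have e : (1 - a) • (x t - v t) + a • (xstar - v t) = a • (xstar - z t) := by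
        rw [hvz t, ← ha']
        module
      calc (1 - a) * ⟪g, x t - v t⟫_ℝ + a * ⟪g, xstar - v t⟫_ℝ
          = ⟪g, (1 - a) • (x t - v t) + a • (xstar - v t)⟫_ℝ := by
            rw [inner_add_right, real_inner_smul_right, real_inner_smul_right]
        _ = ⟪g, a • (xstar - z t)⟫_ℝ := by rw [e]
        _ = a * ⟪g, xstar - z t⟫_ℝ := real_inner_smul_right ..
    have hnorm : ‖z (t+1) - xstar‖^2
        = ‖z t - xstar‖^2 + 2 * (δ/a) * ⟪g, xstar - z t⟫_ℝ + (δ/a)^2 * ‖g‖^2 := by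
      have e : z (t+1) - xstar = (z t - xstar) - (δ/a) • g := by
        rw [hzrec t, ← ha', ← hg]; abel
      rw [e, @norm_sub_sq_real, real_inner_smul_right, norm_smul,
        Real.norm_eq_abs, abs_of_pos (by positivity : (0:ℝ) < δ/a), mul_pow]
      have : ⟪z t - xstar, g⟫_ℝ = - ⟪g, xstar - z t⟫_ℝ := by
        rw [real_inner_comm, ← inner_neg_right]
        congr 1
        abel
      rw [this]
      ring
    have hip : a * ⟪g, xstar - z t⟫_ℝ
        = a^2/(2*δ) * (‖z (t+1) - xstar‖^2 - ‖z t - xstar‖^2)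
          - (δ/2) * ‖g‖^2 := by
      rw [hnorm]
      field_simp
      ring
    -- combine
    have h2' := mul_le_mul_of_nonneg_left h2 (by linarith : (0:ℝ) ≤ 1 - a)
    have h3' := mul_le_mul_of_nonneg_left h3 ha.le
    have e2 : (1-a)*(Fδ (v t) + ⟪g, x t - v t⟫_ℝ)
        = (1-a)*Fδ (v t) + (1-a)*⟪g, x t - v t⟫_ℝ := by ring
    have e3 : a*(Fδ (v t) + ⟪g, xstar - v t⟫_ℝ)
        = a*Fδ (v t) + a*⟪g, xstar - v t⟫_ℝ := by ring
    have e1 : (1-a)*Fδ (v t) + a*Fδ (v t) = Fδ (v t) := by ring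
    have hvb : Fδ (v t) ≤ (1-a)*Fδ (x t) + a*Fδ xstar - a*⟪g, xstar - z t⟫_ℝ := by
      linarith [h2', h3', e2, e3, e1, hcomb]
    have e4 : (1-a)*(Fδ (x t) - Fδ xstar)
        = (1-a)*Fδ (x t) - Fδ xstar + a*Fδ xstar := by ring
    have e5 : a^2/(2*δ)*(‖z (t+1) - xstar‖^2 - ‖z t - xstar‖^2)
        = a^2/(2*δ)*‖z (t+1) - xstar‖^2 - a^2/(2*δ)*‖z t - xstar‖^2 := by ring
    linarith [h1, hvb, hip, e4, e5]
  -- main induction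
  obtain ⟨C, hC⟩ : ∃ C : ℝ, C = (4/9) * (Fδ ybar - Fδ xstar) + (1/(2*δ)) * ‖ybar - xstar‖^2 :=
    ⟨_, rfl⟩
  have main : ∀ t, Fδ (x (t+1)) - Fδ xstar + (α t)^2/(2*δ) * ‖z (t+1) - xstar‖^2
      ≤ (α t)^2 * C := by
    intro t
    induction t with
    | zero =>
      have h := key 0
      rw [hx0, hz0] at h
      rw [hα0] at h ⊢
      have e : (3/4:ℝ)^2 * C
          = (1 - 3/4) * (Fδ ybar - Fδ xstar) + (3/4:ℝ)^2/(2*δ) * ‖ybar - xstar‖^2 := by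
        rw [hC]; field_simp; ring
      linarith [h, e]
    | succ t ih =>
      have h := key (t+1)
      have hq := hap (t+1)
      have hq1 := hale1 (t+1)
      have hrec := hasq t
      have hnn : (0:ℝ) ≤ (α t)^2/(2*δ) * ‖z (t+1) - xstar‖^2 := by positivity
      have ih' := mul_le_mul_of_nonneg_left ih (by linarith : (0:ℝ) ≤ 1 - α (t+1))
      have e1 : (α (t+1))^2/(2*δ)*‖z (t+1) - xstar‖^2
          = (1 - α (t+1))*((α t)^2/(2*δ)*‖z (t+1) - xstar‖^2) := by
        rw [hrec]; ring
      have e2 : (α (t+1))^2 * C = (1 - α (t+1))*((α t)^2 * C) := by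
        rw [hrec]; ring
      have e3 : (1 - α (t+1))*(Fδ (x (t+1)) - Fδ xstar + (α t)^2/(2*δ)*‖z (t+1) - xstar‖^2)
          = (1 - α (t+1))*(Fδ (x (t+1)) - Fδ xstar)
            + (1 - α (t+1))*((α t)^2/(2*δ)*‖z (t+1) - xstar‖^2) := by ring
      linarith [h, ih', e1, e2, e3]
  -- positivity and initial-distance facts
  have hF0 : ∀ w, 0 ≤ Fδ w := by
    intro w
    rw [hFδ]
    positivity
  have hFyx : Fδ xstar ≤ Fδ ybar := hxstar ybar
  have hkR : (0:ℝ) < (k:ℝ) := Nat.cast_pos.mpr hk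
  have hdist : ‖ybar - xstar‖ ≤ Fδ xstar := by
    have e : ybar - xstar = (k:ℝ)⁻¹ • ∑ i, (y i - xstar) := by
      rw [hybar, Finset.sum_sub_distrib, smul_sub, Finset.sum_const, card_univ,
        Fintype.card_fin]
      congr 1
      rw [← Nat.cast_smul_eq_nsmul ℝ, smul_smul, inv_mul_cancel₀ hkR.ne', one_smul]
    rw [e, norm_smul, Real.norm_eq_abs, abs_of_pos (by positivity : (0:ℝ) < (k:ℝ)⁻¹),
      hFδ]
    refine mul_le_mul_of_nonneg_left ?_ (by positivity)
    refine le_trans (norm_sum_le _ _) (Finset.sum_le_sum fun i _ => ?_)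
    rw [norm_sub_rev]
    nlinarith [Real.sq_sqrt (show (0:ℝ) ≤ ‖xstar - y i‖^2 + δ^2 by positivity),
      Real.sqrt_nonneg (‖xstar - y i‖^2 + δ^2), norm_nonneg (xstar - y i), sq_nonneg δ,
      sq_nonneg (Real.sqrt (‖xstar - y i‖^2 + δ^2) - ‖xstar - y i‖)]
  -- conclusion
  intro t
  cases t with
  | zero =>
    rw [hx0]
    have hFy := hF0 ybar
    have hFs := hF0 xstar
    have h9 : (0:ℝ) ≤ 9/(8*δ) * (Fδ ybar)^2 := by positivity
    norm_num
    nlinarith [hxstar ybar]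
  | succ s =>
    have hm := main s
    have hs2 : (0:ℝ) < (s:ℝ)+2 := by positivity
    have haa : (α s)^2 ≤ (2/((s:ℝ)+2))^2 := by nlinarith [hap s, hale s]
    have hCnn : 0 ≤ C := by
      rw [hC]
      have h1 := hxstar ybar
      have h2 : (0:ℝ) ≤ (1/(2*δ)) * ‖ybar - xstar‖^2 := by positivity
      nlinarith
    have hchain : Fδ (x (s+1)) - Fδ xstar ≤ (2/((s:ℝ)+2))^2 * C := by
      have hnn : 0 ≤ (α s)^2/(2*δ)*‖z (s+1) - xstar‖^2 := by positivity
      nlinarith [hm, mul_le_mul_of_nonneg_right haa hCnn]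
    have hCle : C ≤ (4/9)*Fδ ybar + (1/(2*δ))*(Fδ ybar)^2 := by
      rw [hC]
      have h1 : ‖ybar - xstar‖^2 ≤ (Fδ ybar)^2 := by
        nlinarith [hdist, hxstar ybar, norm_nonneg (ybar - xstar), hF0 xstar]
      have h2 : (0:ℝ) < 1/(2*δ) := by positivity
      nlinarith [hF0 xstar]
    have hstep2 : (2/((s:ℝ)+2))^2 * C
        ≤ (2/((s:ℝ)+2))^2 * ((4/9)*Fδ ybar + (1/(2*δ))*(Fδ ybar)^2) :=
      mul_le_mul_of_nonneg_left hCle (by positivity)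
    have efin : (2/((s:ℝ)+2))^2 * ((4/9)*Fδ ybar + (1/(2*δ))*(Fδ ybar)^2)
        = (16/(9*(((s:ℝ)+1)+1)^2)) * (Fδ ybar + 9/(8*δ)*(Fδ ybar)^2) := by
      field_simp
      ring
    push_cast
    calc Fδ (x (s+1)) - Fδ xstar ≤ (2/((s:ℝ)+2))^2 * C := hchain
      _ ≤ (2/((s:ℝ)+2))^2 * ((4/9)*Fδ ybar + (1/(2*δ))*(Fδ ybar)^2) := hstep2
      _ = (16/(9*(((s:ℝ)+1)+1)^2)) * (Fδ ybar + 9/(8*δ)*(Fδ ybar)^2) := efin
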